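/- Let X be a real Banach space and let A, B : X ⇉ X* be maximal monotone operators with dom A ∩ int dom B ≠ ∅. Assume that A + N_{cl(dom B)} is maximal monotone of type (FPV) and that dom A ∩ cl(dom B) ⊆ dom B. Then cl(P_X[dom F_{A+B}]) = cl(dom A ∩ dom B), where F_{A+B} is the Fitzpatrick function of A + B and P_X : X × X* → X is the projection (x,x*) ↦ x. -/

import Mathlib

open Set Filter Pointwise

set_option maxHeartbeats 3000000

noncomputable section

variable {X : Type*}

abbrev Dual' (X : Type*) [NormedAddCommGroup X] [NormedSpace ℝ X] := X →L[ℝ] ℝ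

section Defs
variable [NormedAddCommGroup X] [NormedSpace ℝ X]

/-- `A` is a monotone operator. -/
def MonotoneOp (A : X → Set (Dual' X)) : Prop :=
  ∀ x y (x' y' : Dual' X), x' ∈ A x → y' ∈ A y → 0 ≤ (x' - y') (x - y)

/-- `A` is maximal monotone: monotone, and every monotonically related pair is in the graph. -/
def MaxMonotone (A : X → Set (Dual' X)) : Prop :=
  MonotoneOp A ∧
    ∀ x (x' : Dual' X), (∀ y y', y' ∈ A y → 0 ≤ (x' - y') (x - y)) → x' ∈ A x

/-- domain of a set-valued operator -/
def domOp (A : X → Set (Dual' X)) : Set X := {x | (A x).Nonempty}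

/-- pointwise Minkowski sum of two set-valued operators -/
def opSum (A B : X → Set (Dual' X)) : X → Set (Dual' X) := fun x => A x + B x

/-- normal cone operator of a set `C` -/
def normalCone (C : Set X) : X → Set (Dual' X) :=
  fun x => {x' | x ∈ C ∧ ∀ c ∈ C, x' (c - x) ≤ 0}

/-- the Fitzpatrick function of `A` -/
def fitz (A : X → Set (Dual' X)) : X × Dual' X → EReal :=
  fun p => ⨆ q ∈ {q : X × Dual' X | q.2 ∈ A q.1},
    ((q.2 p.1 + p.2 q.1 - q.2 q.1 : ℝ) : EReal)

/-- `A` is maximal monotone of type (FPV) -/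
def FPV (A : X → Set (Dual' X)) : Prop :=
  MaxMonotone A ∧
    ∀ U : Set X, IsOpen U → Convex ℝ U → (U ∩ domOp A).Nonempty →
      ∀ x (x' : Dual' X), x ∈ U →
        (∀ y y', y' ∈ A y → y ∈ U → 0 ≤ (x' - y') (x - y)) → x' ∈ A x

/-- `A` is a linear relation: its graph is a linear subspace of `X × X*` -/
def LinearRel (A : X → Set (Dual' X)) : Prop :=
  (0 : Dual' X) ∈ A 0 ∧
  (∀ x y (x' y' : Dual' X), x' ∈ A x → y' ∈ A y → x' + y' ∈ A (x + y)) ∧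
  (∀ (c : ℝ) x (x' : Dual' X), x' ∈ A x → c • x' ∈ A (c • x))

/-- subdifferential of an extended-real-valued function -/
def subdiff (f : X → EReal) : X → Set (Dual' X) :=
  fun x => {x' | ∀ y, ((x' (y - x) : ℝ) : EReal) + f x ≤ f y}

/-- `f` is proper: never `⊥` and not identically `⊤` -/
def ProperFun (f : X → EReal) : Prop := (∀ x, f x ≠ ⊥) ∧ ∃ x, f x ≠ ⊤

/-- convexity for extended-real-valued functions -/
def EConvexOn (f : X → EReal) : Prop :=
  ∀ x y (t : ℝ), 0 ≤ t → t ≤ 1 →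
    f (t • x + (1 - t) • y) ≤ (t : EReal) * f x + ((1 - t : ℝ) : EReal) * f y

/-- effective domain of an extended-real-valued function -/
def domFun (f : X → EReal) : Set X := {x | f x ≠ ⊤}

end Defs

variable [NormedAddCommGroup X] [NormedSpace ℝ X] [CompleteSpace X]

private lemma arith_aux {V L nn x : ℝ} (hV : nn < V) (hL : 0 ≤ L) (h2L : 2*L ≤ nn) (h1n : 1 ≤ nn)
    (hx : x*(nn+1) ≤ 1) (hvsL : V ≤ L*(1+V*x)) : False := by
  have hV0 : 0 ≤ V := by linarith
  nlinarith [mul_le_mul_of_nonneg_left hx (mul_nonneg hL hV0),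
    mul_le_mul_of_nonneg_right hvsL (by linarith : (0:ℝ) ≤ nn+1),
    mul_le_mul_of_nonneg_right h2L hV0, mul_le_mul_of_nonneg_right h2L (by linarith : (0:ℝ) ≤ nn+1)]

/-- Local boundedness of a monotone operator at interior points of its domain. -/
lemma loc_bdd {B : X → Set (Dual' X)} (hB : MonotoneOp B) {x0 : X} {ρB : ℝ} (hρB : 0 < ρB)
    (hball : Metric.closedBall x0 ρB ⊆ domOp B) :
    ∃ ρ1 K1 : ℝ, 0 < ρ1 ∧ ρ1 ≤ ρB ∧ 0 ≤ K1 ∧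
      ∀ x ∈ Metric.closedBall x0 ρ1, ∀ v ∈ B x, ‖v‖ ≤ K1 := by
  by_contra hcon
  push_neg at hcon
  have hseq : ∀ n : ℕ, ∃ x ∈ Metric.closedBall x0 (min ρB (1/(n+1))),
      ∃ v ∈ B x, (n : ℝ) < ‖v‖ := by
    intro n
    rcases hcon (min ρB (1/(n+1))) n (lt_min hρB (by positivity)) (min_le_left _ _)
      (Nat.cast_nonneg n) with ⟨x, hx, v, hv, hnv⟩
    exact ⟨x, hx, v, hv, hnv⟩
  choose xs hxs vs hvs hnv using hseq
  have hxsd : ∀ n : ℕ, ‖xs n - x0‖ ≤ min ρB (1/(n+1)) := by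
    intro n; have := hxs n; rwa [Metric.mem_closedBall, dist_eq_norm] at this
  set g : ℕ → Dual' X := fun n => (1 + ‖vs n‖ * ‖xs n - x0‖)⁻¹ • vs n with hgdef
  have hden : ∀ n, 0 < 1 + ‖vs n‖ * ‖xs n - x0‖ := by
    intro n; positivity
  -- pointwise boundedness
  have hpt : ∀ u : X, ∃ Cu : ℝ, ∀ n, ‖g n u‖ ≤ Cu := by
    intro u
    set c : ℝ := ρB / (‖u‖ + 1) with hcdef
    have hc : 0 < c := by positivity
    have hcu : ‖c • u‖ ≤ ρB := by
      rw [norm_smul, Real.norm_eq_abs, abs_of_pos hc, hcdef]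
      rw [div_mul_eq_mul_div, div_le_iff₀ (by positivity)]
      nlinarith [norm_nonneg u]
    have h1 : x0 + c • u ∈ domOp B := hball (by
      simp only [Metric.mem_closedBall, dist_eq_norm]; simpa using hcu)
    have h2 : x0 - c • u ∈ domOp B := hball (by
      simp only [Metric.mem_closedBall, dist_eq_norm]; simpa using hcu)
    obtain ⟨G1, hG1⟩ := h1
    obtain ⟨G2, hG2⟩ := h2
    set G : ℝ := 2 * ρB * max ‖G1‖ ‖G2‖ with hGdef
    have hGnn : 0 ≤ G := by positivity
    have hbnd : ∀ n, |c * vs n u| ≤ ‖vs n‖ * ‖xs n - x0‖ + G := by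
      intro n
      have hxn : ‖xs n - x0‖ ≤ ρB := le_trans (hxsd n) (min_le_left _ _)
      have m1 := hB (xs n) (x0 + c • u) (vs n) G1 (hvs n) hG1
      have m2 := hB (xs n) (x0 - c • u) (vs n) G2 (hvs n) hG2
      simp only [ContinuousLinearMap.sub_apply] at m1 m2
      have e1 : xs n - (x0 + c • u) = (xs n - x0) - c • u := by abel
      have e2 : xs n - (x0 - c • u) = (xs n - x0) + c • u := by abel
      rw [e1] at m1; rw [e2] at m2
      have hw1 : ‖(xs n - x0) - c • u‖ ≤ 2 * ρB := (norm_sub_le _ _).trans (by linarith)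
      have hw2 : ‖(xs n - x0) + c • u‖ ≤ 2 * ρB := (norm_add_le _ _).trans (by linarith)
      have hm1 : ‖G1‖ * (2*ρB) ≤ G := by
        have := mul_le_mul_of_nonneg_left (le_max_left ‖G1‖ ‖G2‖) (by positivity : (0:ℝ) ≤ 2*ρB)
        rw [hGdef]; linarith [mul_comm ‖G1‖ (2*ρB)]
      have hm2 : ‖G2‖ * (2*ρB) ≤ G := by
        have := mul_le_mul_of_nonneg_left (le_max_right ‖G1‖ ‖G2‖) (by positivity : (0:ℝ) ≤ 2*ρB)
        rw [hGdef]; linarith [mul_comm ‖G2‖ (2*ρB)]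
      have b1 : -G ≤ G1 ((xs n - x0) - c • u) := by
        have h := G1.le_opNorm ((xs n - x0) - c • u)
        rw [Real.norm_eq_abs] at h
        have h2 : ‖G1‖ * ‖(xs n - x0) - c • u‖ ≤ ‖G1‖ * (2 * ρB) :=
          mul_le_mul_of_nonneg_left hw1 (norm_nonneg _)
        linarith [neg_abs_le (G1 ((xs n - x0) - c • u))]
      have b2 : -G ≤ G2 ((xs n - x0) + c • u) := by
        have h := G2.le_opNorm ((xs n - x0) + c • u)
        rw [Real.norm_eq_abs] at h
        have h2 : ‖G2‖ * ‖(xs n - x0) + c • u‖ ≤ ‖G2‖ * (2 * ρB) :=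
          mul_le_mul_of_nonneg_left hw2 (norm_nonneg _)
        linarith [neg_abs_le (G2 ((xs n - x0) + c • u))]
      have a1 : |vs n (xs n - x0)| ≤ ‖vs n‖ * ‖xs n - x0‖ := by
        have h := (vs n).le_opNorm (xs n - x0); rwa [Real.norm_eq_abs] at h
      have evs1 : vs n ((xs n - x0) - c • u) = vs n (xs n - x0) - c * vs n u := by
        rw [map_sub, map_smul]; simp
      have evs2 : vs n ((xs n - x0) + c • u) = vs n (xs n - x0) + c * vs n u := by
        rw [map_add, map_smul]; simp
      rw [evs1] at m1; rw [evs2] at m2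
      rw [abs_le]
      constructor
      · linarith [neg_abs_le (vs n (xs n - x0)), le_abs_self (vs n (xs n - x0))]
      · linarith [neg_abs_le (vs n (xs n - x0)), le_abs_self (vs n (xs n - x0))]
    refine ⟨(1 + G) / c, fun n => ?_⟩
    have heq : ‖g n u‖ = (1 + ‖vs n‖ * ‖xs n - x0‖)⁻¹ * |vs n u| := by
      rw [hgdef]
      simp only [ContinuousLinearMap.smul_apply, smul_eq_mul, Real.norm_eq_abs, abs_mul,
        abs_of_pos (inv_pos.2 (hden n))]
    rw [heq, inv_mul_le_iff₀ (hden n), ← mul_div_assoc, le_div_iff₀ hc]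
    have h3 := hbnd n
    rw [abs_mul, abs_of_pos hc] at h3
    nlinarith [abs_nonneg (vs n u),
      mul_nonneg (norm_nonneg (vs n)) (norm_nonneg (xs n - x0))]
  obtain ⟨L0, hL0⟩ := banach_steinhaus hpt
  set L := max L0 0 with hLdef
  have hLnn : 0 ≤ L := le_max_right _ _
  have hL : ∀ n, ‖g n‖ ≤ L := fun n => (hL0 n).trans (le_max_left _ _)
  set n := ⌈2 * L⌉₊ + 1 with hndef
  have h2L : 2 * L ≤ (n : ℝ) := by
    push_cast [hndef]
    nlinarith [Nat.le_ceil (2*L)]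
  have h1n : (1:ℝ) ≤ (n:ℝ) := by
    push_cast [hndef]
    linarith [(Nat.cast_nonneg ⌈2*L⌉₊ : (0:ℝ) ≤ (⌈2*L⌉₊ : ℕ))]
  have heq : ‖g n‖ = (1 + ‖vs n‖ * ‖xs n - x0‖)⁻¹ * ‖vs n‖ := by
    rw [show g n = (1 + ‖vs n‖ * ‖xs n - x0‖)⁻¹ • vs n from rfl]
    exact (norm_smul ((1 + ‖vs n‖ * ‖xs n - x0‖)⁻¹) (vs n)).trans
      (by rw [Real.norm_eq_abs, abs_of_pos (inv_pos.2 (hden n))])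
  have hvsL : ‖vs n‖ ≤ L * (1 + ‖vs n‖ * ‖xs n - x0‖) := by
    have := hL n
    rw [heq, inv_mul_le_iff₀ (hden n)] at this
    linarith [this]
  have hx1 : ‖xs n - x0‖ * ((n:ℝ)+1) ≤ 1 := by
    have h := (hxsd n).trans (min_le_right _ _)
    rw [div_eq_mul_inv, one_mul] at h
    calc ‖xs n - x0‖ * ((n:ℝ)+1) ≤ ((n:ℝ)+1)⁻¹ * ((n:ℝ)+1) :=
          mul_le_mul_of_nonneg_right h (by positivity)
      _ = 1 := by field_simp
  exact arith_aux (hnv n) hLnn h2L h1n hx1 hvsL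

theorem stmt5 (A B : X → Set (Dual' X)) (hA : MaxMonotone A) (hB : MaxMonotone B)
    (hint : (domOp A ∩ interior (domOp B)).Nonempty)
    (hFPV : FPV (opSum A (normalCone (closure (domOp B)))))
    (hsub : domOp A ∩ closure (domOp B) ⊆ domOp B) :
    closure (Prod.fst '' {p : X × Dual' X | fitz (opSum A B) p < ⊤}) =
      closure (domOp A ∩ domOp B) := by
  -- domain of the operator S = A + N_C equals dom A ∩ dom B
  have hDS : domOp (opSum A (normalCone (closure (domOp B)))) = domOp A ∩ domOp B := by
    ext x
    constructor
    · rintro ⟨y', hy'⟩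
      rcases Set.mem_add.1 hy' with ⟨a, ha, ν, hν, rfl⟩
      exact ⟨⟨a, ha⟩, hsub ⟨⟨a, ha⟩, hν.1⟩⟩
    · rintro ⟨⟨a, ha⟩, hxB⟩
      exact ⟨a + 0, Set.add_mem_add ha ⟨subset_closure hxB, fun c _ => by simp⟩⟩
  -- easy inclusion
  have heasy : domOp A ∩ domOp B ⊆
      Prod.fst '' {p : X × Dual' X | fitz (opSum A B) p < ⊤} := by
    rintro x ⟨⟨a, ha⟩, ⟨b, hb⟩⟩
    refine ⟨(x, a + b), ?_, rfl⟩
    have hle : fitz (opSum A B) (x, a + b) ≤ (((a + b) x : ℝ) : EReal) := by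
      refine iSup₂_le fun q hq => ?_
      rcases Set.mem_add.1 hq with ⟨α, hα, β, hβ, hq2⟩
      rw [EReal.coe_le_coe_iff]
      have h1 := hA.1 x q.1 a α ha hα
      have h2 := hB.1 x q.1 b β hb hβ
      simp only [ContinuousLinearMap.sub_apply, map_sub, ContinuousLinearMap.add_apply] at h1 h2 ⊢
      rw [← hq2]
      simp only [ContinuousLinearMap.add_apply]
      linarith
    exact mem_setOf_eq ▸ lt_of_le_of_lt hle (EReal.coe_lt_top _)
  refine subset_antisymm ?_ (closure_mono heasy)
  -- hard inclusion
  refine closure_minimal ?_ isClosed_closure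
  rintro x ⟨⟨z, zs⟩, hzM, rfl⟩
  simp only [mem_setOf_eq] at hzM
  rw [show Prod.fst ((z, zs) : X × Dual' X) = z from rfl]
  by_contra hzK
  -- basic data
  obtain ⟨x0, hx0A, hx0iB⟩ := hint
  have hx0B : x0 ∈ domOp B := interior_subset hx0iB
  obtain ⟨a0, ha0⟩ := hx0A
  obtain ⟨ρ0, hρ0pos, hρ0⟩ : ∃ ρ0, 0 < ρ0 ∧ Metric.closedBall x0 ρ0 ⊆ domOp B := by
    rcases Metric.mem_nhds_iff.1 (mem_interior_iff_mem_nhds.1 hx0iB) with ⟨ε, hε, hball⟩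
    exact ⟨ε/2, by positivity, (Metric.closedBall_subset_ball (by linarith)).trans hball⟩
  obtain ⟨ρ1, K1, hρ1pos, hρ1le, hK1, hLB⟩ := loc_bdd hB.1 hρ0pos hρ0
  have hBall1 : Metric.closedBall x0 ρ1 ⊆ domOp B :=
    (Metric.closedBall_subset_closedBall hρ1le).trans hρ0
  have hx0B' := hx0B
  obtain ⟨b0, hb0⟩ := hx0B'
  have hb0K : ‖b0‖ ≤ K1 := hLB x0 (Metric.mem_closedBall_self hρ1pos.le) b0 hb0
  have hx0K : x0 ∈ closure (domOp A ∩ domOp B) := subset_closure ⟨⟨a0, ha0⟩, hx0B⟩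
  have hzne : z ≠ x0 := fun h => hzK (h ▸ hx0K)
  have hN0 : 0 < ‖z - x0‖ := by
    rw [norm_pos_iff, sub_ne_zero]; exact hzne
  set N0 : ℝ := ‖z - x0‖ with hN0def
  -- the segment and the exit parameter
  set φ : ℝ → X := fun t => x0 + t • (z - x0) with hφdef
  have hφc : Continuous φ := by
    simp only [hφdef]; fun_prop
  set T : Set ℝ := Icc (0:ℝ) 1 ∩ φ ⁻¹' (closure (domOp A ∩ domOp B)) with hTdef
  have hT0 : (0:ℝ) ∈ T := by
    constructor
    · exact ⟨le_refl 0, zero_le_one⟩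
    · simp only [mem_preimage, hφdef]
      simpa using hx0K
  have hTc : IsCompact T := isCompact_Icc.inter_right (isClosed_closure.preimage hφc)
  set lb : ℝ := sSup T with hlbdef
  have hlbT : lb ∈ T := hTc.sSup_mem ⟨0, hT0⟩
  have hlb0 : 0 ≤ lb := hlbT.1.1
  have hlb1 : lb ≤ 1 := hlbT.1.2
  have hzhK : φ lb ∈ closure (domOp A ∩ domOp B) := hlbT.2
  have hφ1 : φ 1 = z := by simp [hφdef]
  have hlblt1 : lb < 1 := by
    rcases lt_or_eq_of_le hlb1 with h | h
    · exact h
    · exact absurd (by rw [← h] at hφ1; rw [← hφ1]; exact hzhK) hzK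
  have hbddT : BddAbove T := BddAbove.mono (inter_subset_left) bddAbove_Icc
  have hnotK : ∀ μ, lb < μ → μ ≤ 1 → φ μ ∉ closure (domOp A ∩ domOp B) := by
    intro μ h1 h2 hm
    exact absurd (le_csSup hbddT ⟨⟨le_trans hlb0 h1.le, h2⟩, hm⟩) (not_le.2 h1)
  -- choice of λ
  set η : ℝ := (1 - lb) * ρ1 / (2*ρ1 + 8*N0) with hηdef
  have hηpos : 0 < η := by
    apply div_pos (mul_pos (by linarith) hρ1pos) (by positivity)
  have hηle : η ≤ (1 - lb)/2 := by
    rw [hηdef, div_le_div_iff₀ (by positivity) (by norm_num)]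
    linarith only [mul_nonneg (show (0:ℝ) ≤ 1 - lb by linarith) hN0.le,
      mul_nonneg (show (0:ℝ) ≤ 1 - lb by linarith) hρ1pos.le]
  set lam : ℝ := lb + η with hlamdef
  have hlam0 : 0 < lam := by linarith
  have hlam1 : lam < 1 := by linarith
  set zl : X := φ lam with hzldef
  have hzlK : zl ∉ closure (domOp A ∩ domOp B) :=
    hnotK lam (by linarith) hlam1.le
  set D0 : ℝ := η * N0 with hD0def
  have hD0pos : 0 < D0 := mul_pos hηpos hN0
  have hzd : zl - φ lb = η • (z - x0) := by
    simp only [hzldef, hφdef, hlamdef]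
    rw [add_smul]; abel
  have hD0 : ‖zl - φ lb‖ = D0 := by
    rw [hzd, norm_smul, Real.norm_eq_abs, abs_of_pos hηpos]
  have hkey10 : 2*D0 ≤ (1-lam)*ρ1/2 := by
    have h8 : η*(2*ρ1+8*N0) = (1-lb)*ρ1 := by
      rw [hηdef]; field_simp
    have h10 : (0:ℝ) ≤ (1 - lb) * ρ1 :=
      mul_nonneg (show (0:ℝ) ≤ 1 - lb by linarith) hρ1pos.le
    have h9 := mul_le_mul_of_nonneg_right hηle hρ1pos.le
    linarith only [h8, h9, h10, hD0def, hlamdef]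
  -- the distance
  have hKne : (closure (domOp A ∩ domOp B)).Nonempty := ⟨x0, hx0K⟩
  set d : ℝ := Metric.infDist zl (closure (domOp A ∩ domOp B)) with hddef
  have hd : 0 < d := (isClosed_closure.notMem_iff_infDist_pos hKne).1 hzlK
  have hdD0 : d ≤ D0 := by
    rw [hddef, ← hD0]
    rw [← dist_eq_norm]
    exact Metric.infDist_le_dist_of_mem hzhK
  -- the norming functional
  obtain ⟨w, hw1, hwv⟩ := exists_dual_vector ℝ (zl - φ lb)
    (by rw [norm_ne_zero_iff, sub_ne_zero]; exact fun h => hzlK (h ▸ hzhK))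
  have hwD0 : w (zl - φ lb) = D0 := by rw [← hD0]; exact_mod_cast hwv
  -- the open convex set U
  set U : Set X := segment ℝ (φ lb) zl + Metric.ball (0:X) (d/4) with hUdef
  have hUopen : IsOpen U := Metric.isOpen_ball.add_left
  have hUconvex : Convex ℝ U := (convex_segment _ _).add (convex_ball _ _)
  have hzlU : zl ∈ U := by
    have := Set.add_mem_add (right_mem_segment ℝ (φ lb) zl)
      (Metric.mem_ball_self (by positivity) : (0:X) ∈ Metric.ball (0:X) (d/4))
    rwa [add_zero] at this
  -- U meets the domain
  obtain ⟨y0, hy0U, hy0S⟩ :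
      (U ∩ domOp (opSum A (normalCone (closure (domOp B))))).Nonempty := by
    rw [hDS]
    rcases Metric.mem_closure_iff.1 hzhK (d/4) (by positivity) with ⟨y0, hy0D, hy0d⟩
    refine ⟨y0, ?_, hy0D⟩
    rw [hUdef]
    have : y0 = φ lb + (y0 - φ lb) := by abel
    rw [this]
    refine Set.add_mem_add (left_mem_segment ℝ _ _) ?_
    simpa [Metric.mem_ball, dist_eq_norm, norm_sub_rev] using hy0d
  -- geometric properties of points of U
  set R : ℝ := 2*D0 + lam*N0 with hRdef
  have hRnn : 0 ≤ R := by positivity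
  have hUprop : ∀ y ∈ U, ‖y - zl‖ ≤ 2*D0 ∧
      (y ∈ closure (domOp A ∩ domOp B) → d/2 ≤ w (zl - y)) := by
    rintro y hy
    rcases Set.mem_add.1 hy with ⟨p, hp, e, he, rfl⟩
    rcases hp with ⟨ca, cb, hca, hcb, hcab, rfl⟩
    have he' : ‖e‖ < d/4 := by
      simpa [Metric.mem_ball, dist_eq_norm] using he
    have hysub : (ca • φ lb + cb • zl + e) - zl = ca • (φ lb - zl) + e := by
      rw [show cb = 1 - ca by linarith]; module
    have hca1 : ca ≤ 1 := by linarith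
    have hnrm : ‖(ca • φ lb + cb • zl + e) - zl‖ ≤ ca * D0 + d/4 := by
      rw [hysub]
      refine (norm_add_le _ _).trans ?_
      rw [norm_smul, Real.norm_eq_abs, abs_of_nonneg hca, norm_sub_rev, hD0]
      linarith
    constructor
    · refine hnrm.trans ?_
      linarith only [mul_le_mul_of_nonneg_right hca1 hD0pos.le, hdD0, hd]
    · intro hyK
      have hdy : d ≤ ‖(ca • φ lb + cb • zl + e) - zl‖ := by
        rw [← dist_eq_norm, dist_comm]
        exact Metric.infDist_le_dist_of_mem hyK
      have hca34 : 3*(d/4) ≤ ca * D0 := by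
        have := hdy.trans hnrm
        linarith
      have hwe : |w e| ≤ ‖e‖ := by
        have := w.le_opNorm e
        rw [Real.norm_eq_abs, hw1, one_mul] at this
        exact this
      have : w (zl - (ca • φ lb + cb • zl + e)) = ca * w (zl - φ lb) - w e := by
        have hz2 : zl - (ca • φ lb + cb • zl + e) = ca • (zl - φ lb) - e := by
          rw [show cb = 1 - ca by linarith]; module
        rw [hz2, map_sub, map_smul, smul_eq_mul]
      rw [this, hwD0]
      have h1 := neg_abs_le (w e)
      have h2 := le_abs_self (w e)
      linarith
  -- a real upper bound for the Fitzpatrick function value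
  obtain ⟨r, hMr⟩ : ∃ r : ℝ, fitz (opSum A B) (z, zs) ≤ (r : EReal) :=
    ⟨(fitz (opSum A B) (z, zs)).toReal, EReal.le_coe_toReal hzM.ne⟩
  -- the constant and the multiplier
  set C0 : ℝ := ‖zs‖*(‖x0‖+R) + 2*D0*‖zs‖ + ‖a0‖*R + 2*K1*(R+ρ1) + K1*R with hC0def
  have hC0 : 0 ≤ C0 := by positivity
  set n : ℝ := (C0 + |r| + 1) * (2/d) with hndef
  have hn0 : 0 ≤ n := by positivity
  have hnd : n * (d/2) = C0 + |r| + 1 := by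
    rw [hndef]; field_simp
  clear_value N0 lb η lam zl D0 d R C0 n
  -- the key estimate: z_λ is monotonically related to gph S ∩ U×X*
  have hrel : ∀ y y', y' ∈ opSum A (normalCone (closure (domOp B))) y → y ∈ U →
      0 ≤ ((zs + n • w) - y') (zl - y) := by
    intro y y' hy' hyU
    by_contra hneg
    push_neg at hneg
    rcases Set.mem_add.1 hy' with ⟨a, ha, ν, hν, rfl⟩
    have hyA : y ∈ domOp A := ⟨a, ha⟩
    have hyB : y ∈ domOp B := hsub ⟨hyA, hν.1⟩
    have hyK : y ∈ closure (domOp A ∩ domOp B) := subset_closure ⟨hyA, hyB⟩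
    obtain ⟨b, hb⟩ := hyB
    -- absorption of the normal cone into B
    have habs : b + ν ∈ B y := by
      apply hB.2 y (b + ν)
      intro wp wd hwd
      have h1 := hB.1 y wp b wd hb hwd
      have h2 : ν (wp - y) ≤ 0 := hν.2 wp (subset_closure ⟨wd, hwd⟩)
      simp only [ContinuousLinearMap.sub_apply, ContinuousLinearMap.add_apply] at h1 ⊢
      have h3 : ν (y - wp) = - ν (wp - y) := by
        rw [← map_neg]; congr 1; abel
      linarith [h3 ▸ neg_nonneg.2 h2]
    have hq : a + (b + ν) ∈ opSum A B y := Set.add_mem_add ha habs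
    have hlow : (((a + (b + ν)) z + zs y - (a + (b + ν)) y : ℝ) : EReal) ≤
        fitz (opSum A B) (z, zs) := by
      exact le_iSup₂ (f := fun (q : X × Dual' X) (_ : q.2 ∈ opSum A B q.1) =>
        ((q.2 (z, zs).1 + (z, zs).2 q.1 - q.2 q.1 : ℝ) : EReal)) (y, a + (b + ν)) hq
    have hr' : (a + (b + ν)) z + zs y - (a + (b + ν)) y ≤ r := by
      exact_mod_cast hlow.trans hMr
    simp only [ContinuousLinearMap.add_apply] at hr'
    -- bounds
    obtain ⟨hy2D0, hsepK⟩ := hUprop y hyU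
    have hsep : d/2 ≤ w zl - w y := by
      have := hsepK hyK
      rwa [map_sub] at this
    have hyx0 : ‖y - x0‖ ≤ R := by
      rw [hRdef, hN0def]
      have h1 : ‖zl - x0‖ = lam * ‖z - x0‖ := by
        have h2 : zl - x0 = lam • (z - x0) := by
          simp only [hzldef, hφdef]; abel
        rw [h2, norm_smul, Real.norm_eq_abs, abs_of_pos hlam0]
      calc ‖y - x0‖ ≤ ‖y - zl‖ + ‖zl - x0‖ := by
            have h3 : y - x0 = (y - zl) + (zl - x0) := by abel
            rw [h3]; exact norm_add_le _ _
        _ ≤ 2*D0 + lam*‖z - x0‖ := add_le_add hy2D0 h1.le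
    -- norm bound on b
    have hbn : ρ1 * ‖b‖ ≤ (b y - b x0) + K1*(R + ρ1) := by
      set E : ℝ := (b y - b x0) + K1*(R + ρ1) with hEdef
      have hunit : ∀ u : X, ‖u‖ ≤ 1 → ρ1 * b u ≤ E := by
        intro u hu
        have hmem : x0 + ρ1 • u ∈ Metric.closedBall x0 ρ1 := by
          simp only [Metric.mem_closedBall, dist_eq_norm]
          rw [show x0 + ρ1 • u - x0 = ρ1 • u by abel, norm_smul, Real.norm_eq_abs,
            abs_of_pos hρ1pos]
          linarith only [mul_le_mul_of_nonneg_left hu hρ1pos.le]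
        obtain ⟨v, hv⟩ := hBall1 hmem
        have hvK : ‖v‖ ≤ K1 := hLB _ hmem v hv
        have hm := hB.1 y (x0 + ρ1 • u) b v hb hv
        simp only [ContinuousLinearMap.sub_apply] at hm
        have e1 : y - (x0 + ρ1 • u) = (y - x0) - ρ1 • u := by abel
        rw [e1] at hm
        have hb2 : b ((y - x0) - ρ1 • u) = (b y - b x0) - ρ1 * b u := by
          rw [map_sub, map_sub, map_smul]; simp
        have hv1 : |v ((y - x0) - ρ1 • u)| ≤ K1 * (R + ρ1) := by
          have h := v.le_opNorm ((y - x0) - ρ1 • u)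
          rw [Real.norm_eq_abs] at h
          have hn : ‖(y - x0) - ρ1 • u‖ ≤ R + ρ1 := by
            refine (norm_sub_le _ _).trans ?_
            rw [norm_smul, Real.norm_eq_abs, abs_of_pos hρ1pos]
            linarith only [hyx0, mul_le_mul_of_nonneg_left hu hρ1pos.le]
          linarith only [h, mul_le_mul hvK hn (norm_nonneg _) hK1]
        rw [hb2] at hm
        have := neg_abs_le (v ((y - x0) - ρ1 • u))
        linarith
      have hE0 : 0 ≤ E := by
        have := hunit 0 (by simp)
        simpa using this
      have hnorm : ‖b‖ ≤ E / ρ1 := by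
        refine b.opNorm_le_bound (by positivity) (fun x => ?_)
        rcases eq_or_ne x 0 with rfl | hx
        · simp
        · have hxn : 0 < ‖x‖ := norm_pos_iff.2 hx
          have hux : ‖‖x‖⁻¹ • x‖ ≤ 1 := by
            rw [norm_smul, Real.norm_eq_abs, abs_of_pos (inv_pos.2 hxn),
              inv_mul_cancel₀ hxn.ne']
          have h1 := hunit (‖x‖⁻¹ • x) hux
          have h2 := hunit (-(‖x‖⁻¹ • x)) (by rwa [norm_neg])
          rw [map_smul, smul_eq_mul] at h1
          rw [map_neg, map_smul, smul_eq_mul] at h2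
          have h3 : ρ1 * (‖x‖⁻¹ * |b x|) ≤ E := by
            rcases abs_cases (b x) with ⟨he, _⟩ | ⟨he, _⟩
            · rw [he]; exact h1
            · rw [he]; calc ρ1 * (‖x‖⁻¹ * -b x) = ρ1 * -(‖x‖⁻¹ * b x) := by ring
                _ ≤ E := h2
          rw [Real.norm_eq_abs, div_mul_eq_mul_div, le_div_iff₀ hρ1pos]
          calc |b x| * ρ1 = (ρ1 * (‖x‖⁻¹ * |b x|)) * ‖x‖ := by field_simp
            _ ≤ E * ‖x‖ := mul_le_mul_of_nonneg_right h3 hxn.le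
      calc ρ1 * ‖b‖ ≤ ρ1 * (E/ρ1) := mul_le_mul_of_nonneg_left hnorm hρ1pos.le
        _ = E := by field_simp
    -- functional evaluations along the segment
    have heval : ∀ f : Dual' X, f zl = f x0 + lam * (f z - f x0) := by
      intro f
      simp only [hzldef, hφdef, map_add, map_smul, smul_eq_mul, map_sub]
    -- scalar inequalities
    have i1 : zs zl - zs y ≥ -(2*D0*‖zs‖) := by
      have h := zs.le_opNorm (zl - y)
      rw [Real.norm_eq_abs, map_sub] at h
      have h2 : ‖zs‖ * ‖zl - y‖ ≤ ‖zs‖ * (2*D0) := by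
        rw [norm_sub_rev]
        exact mul_le_mul_of_nonneg_left hy2D0 (norm_nonneg _)
      have hna := neg_abs_le (zs zl - zs y)
      linarith only [h, h2, hna]
    have i3 : b zl - b y ≥ -(2*D0*‖b‖) := by
      have h := b.le_opNorm (zl - y)
      rw [Real.norm_eq_abs, map_sub] at h
      have h2 : ‖b‖ * ‖zl - y‖ ≤ ‖b‖ * (2*D0) := by
        rw [norm_sub_rev]
        exact mul_le_mul_of_nonneg_left hy2D0 (norm_nonneg _)
      have hna := neg_abs_le (b zl - b y)
      linarith only [h, h2, hna]
    have i4 : a y - a x0 ≥ -(‖a0‖*R) := by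
      have hm := hA.1 y x0 a a0 ha ha0
      simp only [ContinuousLinearMap.sub_apply, map_sub] at hm
      have h := a0.le_opNorm (y - x0)
      rw [Real.norm_eq_abs, map_sub] at h
      have h2 : ‖a0‖ * ‖y - x0‖ ≤ ‖a0‖ * R := mul_le_mul_of_nonneg_left hyx0 (norm_nonneg _)
      have hna := neg_abs_le (a0 y - a0 x0)
      linarith only [hm, h, h2, hna]
    have i5 : ν y - ν x0 ≥ 0 := by
      have h2 : ν (x0 - y) ≤ 0 := hν.2 x0 (subset_closure hx0B)
      rw [map_sub] at h2
      linarith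
    have i6 : b y - b x0 ≥ -(K1*R) := by
      have hm := hB.1 y x0 b b0 hb hb0
      simp only [ContinuousLinearMap.sub_apply, map_sub] at hm
      have h := b0.le_opNorm (y - x0)
      rw [Real.norm_eq_abs, map_sub] at h
      have h2 : ‖b0‖ * ‖y - x0‖ ≤ K1 * R :=
        mul_le_mul hb0K hyx0 (norm_nonneg _) hK1
      have hna := neg_abs_le (b0 y - b0 x0)
      linarith only [hm, h, h2, hna]
    have i7 : zs y ≥ -(‖zs‖*(‖x0‖+R)) := by
      have h := zs.le_opNorm y
      rw [Real.norm_eq_abs] at h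
      have hy : ‖y‖ ≤ ‖x0‖ + R := by
        calc ‖y‖ = ‖(y - x0) + x0‖ := by rw [sub_add_cancel]
          _ ≤ ‖y - x0‖ + ‖x0‖ := norm_add_le _ _
          _ ≤ ‖x0‖ + R := by linarith
      have h2 : ‖zs‖ * ‖y‖ ≤ ‖zs‖ * (‖x0‖+R) := mul_le_mul_of_nonneg_left hy (norm_nonneg _)
      have hna := neg_abs_le (zs y)
      linarith only [h, h2, hna]
    -- the violation inequality in scalar form
    have hviol : (zs zl - zs y) + n * (w zl - w y) - ((a zl - a y) + (ν zl - ν y)) < 0 := by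
      have := hneg
      simp only [ContinuousLinearMap.sub_apply, ContinuousLinearMap.add_apply,
        ContinuousLinearMap.smul_apply, smul_eq_mul, map_sub] at this
      linarith
    -- assembling the contradiction
    have ea := heval a
    have eb := heval b
    have eν := heval ν
    have hnw : n * (d/2) ≤ n * (w zl - w y) := mul_le_mul_of_nonneg_left hsep hn0
    have h1lam : (0:ℝ) ≤ 1 - lam := by linarith
    have hlr : lam * r ≤ |r| := by
      linarith only [mul_le_mul_of_nonneg_left (le_abs_self r) hlam0.le,
        mul_nonneg h1lam (abs_nonneg r)]
    have hrl : lam * ((a z + (b z + ν z)) + zs y - (a y + (b y + ν y))) ≤ lam * r :=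
      mul_le_mul_of_nonneg_left hr' hlam0.le
    have hP2 : 2*D0*‖b‖ ≤ ((1-lam)*ρ1/2)*‖b‖ :=
      mul_le_mul_of_nonneg_right hkey10 (norm_nonneg b)
    have hP3 : (1-lam)*(ρ1*‖b‖) ≤ (1-lam)*((b y - b x0) + K1*(R+ρ1)) :=
      mul_le_mul_of_nonneg_left hbn h1lam
    have hP4 : (1-lam)*(-(K1*R)) ≤ (1-lam)*(b y - b x0) :=
      mul_le_mul_of_nonneg_left i6 h1lam
    have hP5 : (1-lam)*(-(‖a0‖*R)) ≤ (1-lam)*(a y - a x0) :=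
      mul_le_mul_of_nonneg_left i4 h1lam
    have hP6 : (1-lam)*(0:ℝ) ≤ (1-lam)*(ν y - ν x0) :=
      mul_le_mul_of_nonneg_left i5 h1lam
    have hP7 : lam*(-(‖zs‖*(‖x0‖+R))) ≤ lam*(zs y) :=
      mul_le_mul_of_nonneg_left i7 hlam0.le
    have hKR : 0 ≤ K1 * R := mul_nonneg hK1 hRnn
    have hKRρ : 0 ≤ K1 * (R + ρ1) := mul_nonneg hK1 (by linarith)
    have haR : 0 ≤ ‖a0‖ * R := mul_nonneg (norm_nonneg _) hRnn
    have hzsR : 0 ≤ ‖zs‖*(‖x0‖+R) := mul_nonneg (norm_nonneg _) (by positivity)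
    have hbnn : 0 ≤ ‖b‖ := norm_nonneg b
    have master : lam * ((a z + (b z + ν z)) + zs y - (a y + (b y + ν y)))
        = lam * zs y + ((a zl - a y) + (ν zl - ν y)) + (b zl - b y)
          + (1-lam) * ((a y - a x0) + (ν y - ν x0)) + (1-lam) * (b y - b x0) := by
      linear_combination -ea - eb - eν
    have step1 : (a zl - a y) + (ν zl - ν y) ≥ (zs zl - zs y) + n * (w zl - w y) := by
      linarith [hviol]
    have step2 : (zs zl - zs y) + n * (w zl - w y) ≥ -(2*D0*‖zs‖) + n*(d/2) := by
      linarith [i1, hnw]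
    have hq1 : 0 ≤ lam*(K1*R) := mul_nonneg hlam0.le hKR
    have hq2 : 0 ≤ lam*(K1*(R+ρ1)) := mul_nonneg hlam0.le hKRρ
    have hq3 : 0 ≤ lam*(‖a0‖*R) := mul_nonneg hlam0.le haR
    have hq4 : 0 ≤ lam*(‖zs‖*(‖x0‖+R)) := mul_nonneg hlam0.le hzsR
    have step3 : (b zl - b y) + (1-lam)*(b y - b x0) ≥ -(2*K1*(R+ρ1) + K1*R) := by
      linarith only [i3, hP2, hP3, hP4, hq1, hq2, hKR, hKRρ]
    have step4 : (1-lam)*((a y - a x0) + (ν y - ν x0)) ≥ -(‖a0‖*R) := by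
      linarith only [hP5, hP6, hq3]
    have hq5 : 0 ≤ (1-lam)*(‖zs‖*(‖x0‖+R)) := mul_nonneg h1lam hzsR
    have step5 : lam * zs y ≥ -(‖zs‖*(‖x0‖+R)) := by
      linarith only [hP7, hq5]
    have final1 : lam * ((a z + (b z + ν z)) + zs y - (a y + (b y + ν y)))
        ≥ n*(d/2) - C0 := by
      rw [master, hC0def]
      linarith only [step1, step2, step3, step4, step5]
    linarith only [final1, hrl, hlr, hnd]
  -- apply the FPV property
  have hin := hFPV.2 U hUopen hUconvex ⟨y0, hy0U, hy0S⟩ zl (zs + n • w) hzlU hrel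
  exact hzlK (subset_closure (hDS ▸ (⟨zs + n • w, hin⟩ :
    zl ∈ domOp (opSum A (normalCone (closure (domOp B)))))))
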